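/- For every constant C > 0, the composite function G(x) := g(e(x)) is continuous and strictly decreasing on (0,∞), and it maps (0,∞) bijectively onto the open interval ( 2C/(2C+1), L ), where L = ( −(2C−1) + √((2C−1)² + 8C) )/2. -/

import Mathlib

open Set Filter

/-- The function e(x) = (2/x²)·eˣ − (1 + 2/x + 2/x²). -/
noncomputable def eFun (x : ℝ) : ℝ :=
  2 / x ^ 2 * Real.exp x - (1 + 2 / x + 2 / x ^ 2)

/-- The function g(x) for a parameter C. -/
noncomputable def gFun (C x : ℝ) : ℝ :=
  (1 / 2) * (-(2 * C - 1 + x * (2 * C + 1)) +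
    Real.sqrt ((2 * C - 1 + x * (2 * C + 1)) ^ 2 + 8 * C * (x + 1)))

/-- The composite G = g ∘ e. -/
noncomputable def GFun (C x : ℝ) : ℝ := gFun C (eFun x)

lemma sqrt_arg_pos {C x : ℝ} (hC : 0 < C) (hx : -1 < x) :
    0 < (2 * C - 1 + x * (2 * C + 1)) ^ 2 + 8 * C * (x + 1) := by
  nlinarith [sq_nonneg (2 * C - 1 + x * (2 * C + 1))]

lemma g_pos {C x : ℝ} (hC : 0 < C) (hx : -1 < x) : 0 < gFun C x := by
  unfold gFun
  set b := 2 * C - 1 + x * (2 * C + 1) with hb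
  have h1 := sqrt_arg_pos hC hx
  have h2 : Real.sqrt (b ^ 2 + 8 * C * (x + 1)) ^ 2 = b ^ 2 + 8 * C * (x + 1) :=
    Real.sq_sqrt h1.le
  have h3 : 0 ≤ Real.sqrt (b ^ 2 + 8 * C * (x + 1)) := Real.sqrt_nonneg _
  nlinarith [h2, h3]

lemma g_root {C x : ℝ} (hC : 0 < C) (hx : -1 < x) :
    gFun C x ^ 2 + (2 * C - 1 + x * (2 * C + 1)) * gFun C x = 2 * C * (x + 1) := by
  unfold gFun
  have h2 : Real.sqrt ((2 * C - 1 + x * (2 * C + 1)) ^ 2 + 8 * C * (x + 1)) ^ 2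
      = (2 * C - 1 + x * (2 * C + 1)) ^ 2 + 8 * C * (x + 1) :=
    Real.sq_sqrt (sqrt_arg_pos hC hx).le
  linear_combination (1/4) * h2

lemma g_eq {C x t : ℝ} (hC : 0 < C) (hx : -1 < x) (ht : 0 < t)
    (hroot : t ^ 2 + (2 * C - 1 + x * (2 * C + 1)) * t = 2 * C * (x + 1)) :
    gFun C x = t := by
  set b := 2 * C - 1 + x * (2 * C + 1) with hb
  clear_value b
  have hx1 : 0 < x + 1 := by linarith
  have htb : 0 < t + b := by nlinarith [mul_pos hC hx1]
  have hs : Real.sqrt (b ^ 2 + 8 * C * (x + 1)) = 2 * t + b := by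
    rw [show b ^ 2 + 8 * C * (x + 1) = (2 * t + b) ^ 2 by linear_combination (-4) * hroot]
    exact Real.sqrt_sq (by linarith)
  unfold gFun
  rw [← hb, hs]; ring

lemma g_gt {C x : ℝ} (hC : 0 < C) (hx : 0 ≤ x) :
    2 * C / (2 * C + 1) < gFun C x := by
  have hx1 : (-1 : ℝ) < x := by linarith
  have hg := g_pos hC hx1
  have hr := g_root hC hx1
  have hden : (0 : ℝ) < 2 * C + 1 := by linarith
  rw [div_lt_iff₀ hden]
  by_contra hcon
  push_neg at hcon
  have hg1 : gFun C x < 1 := by nlinarith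
  nlinarith [mul_nonneg hx (by nlinarith : (0:ℝ) ≤ 2 * C - gFun C x * (2 * C + 1)),
    mul_pos (by linarith : (0:ℝ) < 1 - gFun C x) (by nlinarith : (0:ℝ) < gFun C x + 2 * C)]

lemma g_anti {C : ℝ} (hC : 0 < C) : StrictAntiOn (gFun C) (Ici 0) := by
  intro x hx y hy hxy
  have hx1 : (-1 : ℝ) < x := lt_of_lt_of_le (by norm_num) hx
  have hy1 : (-1 : ℝ) < y := lt_of_lt_of_le (by norm_num) hy
  have hrx := g_root hC hx1
  have hry := g_root hC hy1
  have hgx := g_pos hC hx1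
  have hgy := g_pos hC hy1
  have hm := g_gt hC hx
  have hden : (0 : ℝ) < 2 * C + 1 := by linarith
  have hmx : 2 * C < gFun C x * (2 * C + 1) := by
    rw [div_lt_iff₀ hden] at hm; linarith
  have hgyb : 0 < gFun C y + (2 * C - 1 + y * (2 * C + 1)) := by
    nlinarith [mul_pos hC (by linarith : (0:ℝ) < y + 1)]
  by_contra hcon
  push_neg at hcon
  have h1 : 0 ≤ (gFun C y - gFun C x) *
      (gFun C y + gFun C x + (2 * C - 1 + y * (2 * C + 1))) :=
    mul_nonneg (by linarith) (by linarith)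
  have h2 : 0 < (y - x) * (gFun C x * (2 * C + 1) - 2 * C) :=
    mul_pos (by linarith) (by linarith)
  nlinarith [hrx, hry, h1, h2]

lemma g_zero {C : ℝ} (hC : 0 < C) : gFun C 0 = 1 :=
  g_eq hC (by norm_num) one_pos (by ring)

lemma g_cont (C : ℝ) : Continuous (gFun C) := by
  unfold gFun
  continuity

lemma h1_pos {x : ℝ} (hx : 0 < x) : 0 < (x - 1) * Real.exp x + 1 := by
  have hmono : StrictMonoOn (fun y : ℝ => (y - 1) * Real.exp y + 1) (Ici 0) := by
    apply strictMonoOn_of_deriv_pos (convex_Ici 0) (by fun_prop)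
    intro y hy
    rw [interior_Ici] at hy
    have hd : HasDerivAt (fun y : ℝ => (y - 1) * Real.exp y + 1) (y * Real.exp y) y := by
      have h := (((hasDerivAt_id y).sub_const 1).mul (Real.hasDerivAt_exp y)).add_const 1
      refine h.congr_deriv ?_
      simp only [id_eq]
      ring
    rw [hd.deriv]
    exact mul_pos hy (Real.exp_pos y)
  have h := hmono (self_mem_Ici) (mem_Ici.2 hx.le) hx
  simpa using h

lemma h2_pos {x : ℝ} (hx : 0 < x) : 0 < (x - 2) * Real.exp x + x + 2 := by
  have hmono : StrictMonoOn (fun y : ℝ => (y - 2) * Real.exp y + y + 2) (Ici 0) := by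
    apply strictMonoOn_of_deriv_pos (convex_Ici 0) (by fun_prop)
    intro y hy
    rw [interior_Ici] at hy
    have hd : HasDerivAt (fun y : ℝ => (y - 2) * Real.exp y + y + 2)
        ((y - 1) * Real.exp y + 1) y := by
      have h := ((((hasDerivAt_id y).sub_const 2).mul (Real.hasDerivAt_exp y)).add
        (hasDerivAt_id y)).add_const 2
      refine h.congr_deriv ?_
      simp only [id_eq]
      ring
    rw [hd.deriv]
    exact h1_pos hy
  have h := hmono (self_mem_Ici) (mem_Ici.2 hx.le) hx
  simpa using h

lemma eFun_hasDerivAt {x : ℝ} (hx : x ≠ 0) :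
    HasDerivAt eFun (2 / x ^ 3 * ((x - 2) * Real.exp x + x + 2)) x := by
  have hx2 : x ^ 2 ≠ 0 := pow_ne_zero 2 hx
  have hp : HasDerivAt (fun y : ℝ => 2 / y ^ 2)
      ((0 * x ^ 2 - 2 * (2 * x ^ 1)) / (x ^ 2) ^ 2) x :=
    (hasDerivAt_const x 2).div (hasDerivAt_pow 2 x) hx2
  have hq : HasDerivAt (fun y : ℝ => 2 / y) ((0 * x - 2 * 1) / x ^ 2) x :=
    (hasDerivAt_const x 2).div (hasDerivAt_id x) hx
  have h := (hp.mul (Real.hasDerivAt_exp x)).sub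
    (((hasDerivAt_const x 1).add hq).add hp)
  refine h.congr_deriv ?_
  field_simp
  ring

lemma e_contOn : ContinuousOn eFun (Ioi 0) := fun x hx =>
  ((eFun_hasDerivAt (ne_of_gt hx)).continuousAt).continuousWithinAt

lemma e_mono : StrictMonoOn eFun (Ioi 0) := by
  apply strictMonoOn_of_deriv_pos (convex_Ioi 0) e_contOn
  intro x hx
  rw [interior_Ioi] at hx
  rw [(eFun_hasDerivAt (ne_of_gt hx)).deriv]
  exact mul_pos (div_pos (by norm_num) (pow_pos hx 3)) (h2_pos hx)

lemma e_abs_le {x : ℝ} (hx : 0 < x) (hx1 : x ≤ 1) : |eFun x| ≤ x := by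
  have hb := Real.exp_bound (x := x) (by rw [abs_of_pos hx]; exact hx1) (n := 3) (by norm_num)
  have hsum : ∑ m ∈ Finset.range 3, x ^ m / (Nat.factorial m) = 1 + x + x ^ 2 / 2 := by
    simp [Finset.sum_range_succ, Nat.factorial]
  rw [hsum, abs_of_pos hx] at hb
  have hb' : |Real.exp x - (1 + x + x ^ 2 / 2)| ≤ x ^ 3 * (2 / 9) := by
    convert hb using 2
    norm_num [Nat.factorial]
  have hbound : |Real.exp x - (1 + x + x ^ 2 / 2)| ≤ (2 / 9) * x ^ 3 :=
    hb'.trans (le_of_eq (by ring))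
  have key : eFun x = 2 / x ^ 2 * (Real.exp x - (1 + x + x ^ 2 / 2)) := by
    unfold eFun
    field_simp
    ring
  rw [key, abs_mul, abs_of_pos (div_pos (by norm_num) (pow_pos hx 2))]
  have h1 : 2 / x ^ 2 * |Real.exp x - (1 + x + x ^ 2 / 2)| ≤ 2 / x ^ 2 * ((2 / 9) * x ^ 3) :=
    mul_le_mul_of_nonneg_left hbound (by positivity)
  have h2 : 2 / x ^ 2 * ((2 / 9) * x ^ 3) = (4 / 9) * x := by
    field_simp
    ring
  nlinarith [h1, h2]

lemma e_tendsto0 : Tendsto eFun (nhdsWithin 0 (Ioi 0)) (nhds 0) := by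
  apply squeeze_zero_norm' (a := fun x : ℝ => x)
  · filter_upwards [Ioo_mem_nhdsGT_of_mem (by constructor <;> norm_num : (0:ℝ) ∈ Ico (0:ℝ) 1)]
      with y hy
    simpa [Real.norm_eq_abs] using e_abs_le hy.1 hy.2.le
  · exact tendsto_id.mono_left nhdsWithin_le_nhds

lemma e_top : Tendsto eFun atTop atTop := by
  have h : Tendsto (fun x : ℝ => 2 * (Real.exp x / x ^ 2) - 5) atTop atTop := by
    apply tendsto_atTop_add_const_right
    exact (Real.tendsto_exp_div_pow_atTop 2).const_mul_atTop (by norm_num)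
  apply tendsto_atTop_mono' _ _ h
  filter_upwards [eventually_ge_atTop (1 : ℝ)] with x hx
  have hx0 : (0 : ℝ) < x := by linarith
  have h1 : 2 / x ≤ 2 := by rw [div_le_iff₀ hx0]; nlinarith
  have h2 : 2 / x ^ 2 ≤ 2 := by rw [div_le_iff₀ (by positivity)]; nlinarith
  have e1 : 2 * (Real.exp x / x ^ 2) = 2 / x ^ 2 * Real.exp x := by ring
  unfold eFun
  rw [e1]
  linarith

lemma e_nonneg {x : ℝ} (hx : 0 < x) : 0 ≤ eFun x := by
  have hev : ∀ᶠ y in nhdsWithin (0:ℝ) (Ioi 0), eFun y ≤ eFun x := by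
    filter_upwards [Ioo_mem_nhdsGT_of_mem (⟨le_refl 0, hx⟩ : (0:ℝ) ∈ Ico (0:ℝ) x)]
      with y hy
    exact (e_mono hy.1 hx hy.2).le
  exact le_of_tendsto e_tendsto0 hev

lemma e_pos {x : ℝ} (hx : 0 < x) : 0 < eFun x :=
  lt_of_le_of_lt (e_nonneg (half_pos hx)) (e_mono (half_pos hx) hx (half_lt_self hx))

lemma e_surj : SurjOn eFun (Ioi 0) (Ioi 0) := by
  intro y hy
  rw [mem_Ioi] at hy
  obtain ⟨a, ha⟩ := ((e_tendsto0.eventually (gt_mem_nhds hy)).and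
    eventually_mem_nhdsWithin).exists
  obtain ⟨b, hb⟩ := ((e_top.eventually_gt_atTop y).and (eventually_ge_atTop (a + 1))).exists
  have ha0 : 0 < a := ha.2
  have hab : a ≤ b := by linarith [hb.2]
  have hsub : Icc a b ⊆ Ioi 0 := fun t ht => lt_of_lt_of_le ha0 ht.1
  have hivt := intermediate_value_Icc hab (e_contOn.mono hsub)
  obtain ⟨z, hz, hzy⟩ := hivt ⟨ha.1.le, hb.1.le⟩
  exact ⟨z, lt_of_lt_of_le ha0 hz.1, hzy⟩

/-- G = g ∘ e is continuous and strictly decreasing on (0,∞) and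
maps (0,∞) bijectively onto (2C/(2C+1), L). -/
theorem stmt_5 (C : ℝ) (hC : 0 < C) :
    ContinuousOn (GFun C) (Ioi (0 : ℝ)) ∧
    StrictAntiOn (GFun C) (Ioi (0 : ℝ)) ∧
    BijOn (GFun C) (Ioi (0 : ℝ))
      (Ioo (2 * C / (2 * C + 1))
        ((-(2 * C - 1) + Real.sqrt ((2 * C - 1) ^ 2 + 8 * C)) / 2)) := by
  have hL : (-(2 * C - 1) + Real.sqrt ((2 * C - 1) ^ 2 + 8 * C)) / 2 = 1 := by
    rw [show (2 * C - 1) ^ 2 + 8 * C = (2 * C + 1) ^ 2 by ring,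
      Real.sqrt_sq (by linarith : (0:ℝ) ≤ 2 * C + 1)]
    ring
  rw [hL]
  have hGanti : StrictAntiOn (GFun C) (Ioi (0 : ℝ)) := by
    intro x hx y hy hxy
    exact g_anti hC (mem_Ici.2 (e_pos hx).le) (mem_Ici.2 (e_pos hy).le) (e_mono hx hy hxy)
  refine ⟨?_, hGanti, ?_, hGanti.injOn, ?_⟩
  · exact (g_cont C).comp_continuousOn e_contOn
  · -- MapsTo
    intro x hx
    rw [mem_Ioi] at hx
    constructor
    · exact g_gt hC (e_pos hx).le
    · rw [← g_zero hC]
      exact g_anti hC (self_mem_Ici) (mem_Ici.2 (e_pos hx).le) (e_pos hx)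
  · -- SurjOn
    intro t ht
    obtain ⟨ht1, ht2⟩ := ht
    have hden : (0 : ℝ) < 2 * C + 1 := by linarith
    have ht0 : 0 < t := lt_trans (div_pos (by linarith) hden) ht1
    have hD : 0 < (2 * C + 1) * t - 2 * C := by
      rw [div_lt_iff₀ hden] at ht1; linarith
    set xt := (1 - t) * (t + 2 * C) / ((2 * C + 1) * t - 2 * C) with hxt
    have hxt_pos : 0 < xt :=
      div_pos (mul_pos (by linarith) (by linarith)) hD
    have hroot : t ^ 2 + (2 * C - 1 + xt * (2 * C + 1)) * t = 2 * C * (xt + 1) := by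
      rw [hxt]
      field_simp [(by linarith : (0:ℝ) < t * (2 * C + 1) - 2 * C).ne']
      ring
    have hg : gFun C xt = t := g_eq hC (by linarith) ht0 hroot
    obtain ⟨z, hz, hez⟩ := e_surj (mem_Ioi.2 hxt_pos)
    exact ⟨z, hz, by unfold GFun; rw [hez, hg]⟩
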